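/- Let q : [0, 2] → (ℝ²)⁴ be defined for t ∈ [0,1] by a solution of the planar equal-mass four-body Newtonian equations with q₁ ≡ −q₄, q₂ ≡ −q₃, whose configuration at t = 1 is a rectangle in V₁(θ) (i.e. q(1)·R(−θ) is a rectangle symmetric about the coordinate axes with q₁, q₂ in the left half-plane), and whose velocities satisfy q̇₁(1) = −q̇₂(1)·B·R(2θ) and q̇₄(1) = −q̇₃(1)·B·R(2θ), where B = diag(1, −1) and R(2θ) is rotation by 2θ. Define for t ∈ [1, 2]: q₁(t) = q₂(2−t)·B·R(2θ), q₂(t) = q₁(2−t)·B·R(2θ), q₃(t) = q₄(2−t)·B·R(2θ), q₄(t) = q₃(2−t)·B·R(2θ). Then the extended q is C¹ at t = 1 and is a solution of the Newtonian equations on (0, 2). -/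

import Mathlib

open Set Real

/-- Euclidean norm on `ℝ × ℝ`. -/
noncomputable def n2 (p : ℝ × ℝ) : ℝ := Real.sqrt (p.1 ^ 2 + p.2 ^ 2)

/-- Right multiplication of a row vector by the rotation matrix
`R(ψ) = [[cos ψ, sin ψ], [−sin ψ, cos ψ]]`. -/
noncomputable def rotRow (ψ : ℝ) (p : ℝ × ℝ) : ℝ × ℝ :=
  (p.1 * Real.cos ψ - p.2 * Real.sin ψ, p.1 * Real.sin ψ + p.2 * Real.cos ψ)

/-- Right multiplication by `B·R(2θ)`, where `B = diag(1, −1)`. -/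
noncomputable def BR (θ : ℝ) (p : ℝ × ℝ) : ℝ × ℝ := rotRow (2 * θ) (p.1, -p.2)

/-- The relabeling `1 ↔ 2`, `3 ↔ 4` of the bodies. -/
def σswap : Fin 4 → Fin 4 := ![1, 0, 3, 2]

noncomputable def BRlin (θ : ℝ) : ℝ × ℝ →ₗ[ℝ] ℝ × ℝ where
  toFun := BR θ
  map_add' := by
    intro a b
    simp only [BR, rotRow, Prod.ext_iff, Prod.fst_add, Prod.snd_add]
    constructor <;> ring
  map_smul' := by
    intro c a
    simp only [BR, rotRow, Prod.ext_iff, Prod.smul_fst, Prod.smul_snd, smul_eq_mul,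
      RingHom.id_apply]
    constructor <;> ring

noncomputable def BRclm (θ : ℝ) : ℝ × ℝ →L[ℝ] ℝ × ℝ :=
  LinearMap.toContinuousLinearMap (BRlin θ)

lemma BRclm_apply (θ : ℝ) (p : ℝ × ℝ) : BRclm θ p = BR θ p := rfl

lemma BR_sub (θ : ℝ) (p q : ℝ × ℝ) : BR θ (p - q) = BR θ p - BR θ q := by
  simpa only [BRclm_apply] using (BRclm θ).map_sub p q

lemma BR_neg (θ : ℝ) (p : ℝ × ℝ) : BR θ (-p) = - BR θ p := by
  simpa only [BRclm_apply] using (BRclm θ).map_neg p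

lemma BR_zero (θ : ℝ) : BR θ 0 = 0 := by
  simpa only [BRclm_apply] using (BRclm θ).map_zero

lemma BR_smul (θ : ℝ) (c : ℝ) (p : ℝ × ℝ) : BR θ (c • p) = c • BR θ p := by
  simpa only [BRclm_apply] using (BRclm θ).map_smul c p

lemma BR_sum {α : Type*} (θ : ℝ) (s : Finset α) (f : α → ℝ × ℝ) :
    BR θ (∑ j ∈ s, f j) = ∑ j ∈ s, BR θ (f j) := by
  simpa only [BRclm_apply] using map_sum (BRclm θ) f s

lemma n2_BR (θ : ℝ) (p : ℝ × ℝ) : n2 (BR θ p) = n2 p := by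
  unfold n2 BR rotRow
  congr 1
  simp only
  linear_combination (p.1 ^ 2 + p.2 ^ 2) * Real.sin_sq_add_cos_sq (2 * θ)

lemma BR_invol (θ : ℝ) (p : ℝ × ℝ) : BR θ (BR θ p) = p := by
  simp only [BR, rotRow, Prod.ext_iff]
  constructor
  · linear_combination p.1 * Real.sin_sq_add_cos_sq (2 * θ)
  · linear_combination p.2 * Real.sin_sq_add_cos_sq (2 * θ)

lemma BR_rot (θ : ℝ) (p : ℝ × ℝ) : BR θ (rotRow θ p) = rotRow θ (p.1, -p.2) := by
  simp only [BR, rotRow, Prod.ext_iff]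
  rw [Real.cos_two_mul, Real.sin_two_mul]
  constructor
  · linear_combination (2 * p.1 * Real.cos θ) * Real.sin_sq_add_cos_sq θ
  · linear_combination (-2 * p.2 * Real.cos θ) * Real.sin_sq_add_cos_sq θ

lemma hasDerivAt_BR {θ : ℝ} {f : ℝ → ℝ × ℝ} {v : ℝ × ℝ} {t : ℝ}
    (h : HasDerivAt f v t) : HasDerivAt (fun s => BR θ (f s)) (BR θ v) t := by
  exact (BRclm θ).hasFDerivAt.comp_hasDerivAt t h

def σEquiv : Fin 4 ≃ Fin 4 := ⟨σswap, σswap, by decide, by decide⟩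

lemma sum_transport (θ : ℝ) (x : Fin 4 → ℝ × ℝ) (i : Fin 4) :
    BR θ (∑ j ∈ Finset.univ.erase (σswap i),
        (1 / n2 (x j - x (σswap i)) ^ 3) • (x j - x (σswap i)))
      = ∑ j ∈ Finset.univ.erase i,
        (1 / n2 (BR θ (x (σswap j)) - BR θ (x (σswap i))) ^ 3) •
          (BR θ (x (σswap j)) - BR θ (x (σswap i))) := by
  have hterm : ∀ j, (1 / n2 (BR θ (x (σswap j)) - BR θ (x (σswap i))) ^ 3) •
      (BR θ (x (σswap j)) - BR θ (x (σswap i)))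
      = BR θ ((1 / n2 (x (σswap j) - x (σswap i)) ^ 3) • (x (σswap j) - x (σswap i))) := by
    intro j
    rw [← BR_sub, n2_BR, BR_smul]
  simp only [hterm]
  rw [Finset.sum_erase _ (by simp), Finset.sum_erase _ (f := fun j =>
      BR θ ((1 / n2 (x (σswap j) - x (σswap i)) ^ 3) • (x (σswap j) - x (σswap i))))
      (by simp [BR_zero]), BR_sum]
  exact (Equiv.sum_comp σEquiv
    (fun j => BR θ ((1 / n2 (x j - x (σswap i)) ^ 3) • (x j - x (σswap i))))).symm

lemma glue_aux (f g f' g' F F' : ℝ → ℝ × ℝ)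
    (hf : ∀ t ∈ Icc (0:ℝ) 1, HasDerivAt f (f' t) t)
    (hg : ∀ t ∈ Icc (1:ℝ) 2, HasDerivAt g (g' t) t)
    (hF : ∀ t, F t = if t ≤ 1 then f t else g t)
    (hF' : ∀ t, F' t = if t ≤ 1 then f' t else g' t)
    (hm : f 1 = g 1) (hm' : f' 1 = g' 1) :
    ∀ t ∈ Ioo (0:ℝ) 2, HasDerivAt F (F' t) t := by
  rintro t ⟨ht0, ht2⟩
  rcases lt_trichotomy t 1 with h | h | h
  · have heq : F =ᶠ[nhds t] f :=
      Filter.eventuallyEq_of_mem (Iio_mem_nhds h) fun s hs => by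
        rw [hF]; exact if_pos (le_of_lt hs)
    rw [hF', if_pos h.le]
    exact (hf t ⟨ht0.le, h.le⟩).congr_of_eventuallyEq heq
  · subst h
    have hL : HasDerivWithinAt F (f' 1) (Iic 1) 1 := by
      refine ((hf 1 ⟨zero_le_one, le_refl 1⟩).hasDerivWithinAt).congr ?_ ?_
      · intro y hy; rw [hF]; exact if_pos hy
      · rw [hF]; exact if_pos le_rfl
    have hR : HasDerivWithinAt F (f' 1) (Ici 1) 1 := by
      rw [hm']
      refine ((hg 1 ⟨le_refl 1, by norm_num⟩).hasDerivWithinAt).congr ?_ ?_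
      · intro y hy
        rcases eq_or_lt_of_le (Set.mem_Ici.mp hy) with h' | h'
        · rw [hF, ← h', if_pos le_rfl, hm]
        · rw [hF, if_neg (not_le.mpr h')]
      · rw [hF, if_pos le_rfl, hm]
    have := hL.union hR
    rw [Set.Iic_union_Ici] at this
    rw [hF', if_pos le_rfl]
    exact hasDerivWithinAt_univ.mp this
  · have heq : F =ᶠ[nhds t] g :=
      Filter.eventuallyEq_of_mem (Ioi_mem_nhds h) fun s hs => by
        rw [hF]; exact if_neg (not_le.mpr hs)
    rw [hF', if_neg (not_le.mpr h)]
    exact (hg t ⟨h.le, ht2.le⟩).congr_of_eventuallyEq heq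

/-- A collision-free solution of the equal-mass four-body problem on `[0,1]` with
`q₁ ≡ −q₄`, `q₂ ≡ −q₃`, whose configuration at `t = 1` is a rectangle in `V₁(θ)` and whose
velocities satisfy the first-variation boundary conditions at `t = 1`, extends by
`Qᵢ(t) = q_{σ(i)}(2−t)·B·R(2θ)` for `t ∈ [1,2]` to a C¹ classical solution on `(0, 2)`. -/
theorem stmt19 (θ : ℝ) (hθ : θ ∈ Ioo (0 : ℝ) (π / 2)) (q q' q'' : Fin 4 → ℝ → ℝ × ℝ)
    (hd : ∀ i, ∀ t ∈ Icc (0 : ℝ) 1, HasDerivAt (q i) (q' i t) t)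
    (hdd : ∀ i, ∀ t ∈ Icc (0 : ℝ) 1, HasDerivAt (q' i) (q'' i t) t)
    (hsep : ∀ t ∈ Icc (0 : ℝ) 1, ∀ i j, i ≠ j → q i t ≠ q j t)
    (hNewton : ∀ i, ∀ t ∈ Icc (0 : ℝ) 1,
      q'' i t = ∑ j ∈ Finset.univ.erase i,
        (1 / n2 (q j t - q i t) ^ 3) • (q j t - q i t))
    (hsym14 : ∀ t ∈ Icc (0 : ℝ) 1, q 0 t = - q 3 t)
    (hsym23 : ∀ t ∈ Icc (0 : ℝ) 1, q 1 t = - q 2 t)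
    (hrect : ∃ b1 ≥ (0 : ℝ), ∃ b2 ≥ (0 : ℝ),
      q 0 1 = rotRow θ (-b1, -b2) ∧ q 1 1 = rotRow θ (-b1, b2))
    (hvel1 : q' 0 1 = - BR θ (q' 1 1))
    (hvel2 : q' 3 1 = - BR θ (q' 2 1))
    (Q : Fin 4 → ℝ → ℝ × ℝ)
    (hQ : ∀ i t, Q i t = if t ≤ 1 then q i t else BR θ (q (σswap i) (2 - t))) :
    ∃ Q' Q'' : Fin 4 → ℝ → ℝ × ℝ, ∀ i, ∀ t ∈ Ioo (0 : ℝ) 2,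
      HasDerivAt (Q i) (Q' i t) t ∧ HasDerivAt (Q' i) (Q'' i t) t ∧
      Q'' i t = ∑ j ∈ Finset.univ.erase i,
        (1 / n2 (Q j t - Q i t) ^ 3) • (Q j t - Q i t) := by
  have hone : (1:ℝ) ∈ Icc (0:ℝ) 1 := ⟨zero_le_one, le_rfl⟩
  have e14 : q 3 1 = - q 0 1 := by rw [hsym14 1 hone, neg_neg]
  have e23 : q 2 1 = - q 1 1 := by rw [hsym23 1 hone, neg_neg]
  -- position matching at t = 1
  obtain ⟨b1, hb1, b2, hb2, h0, h1⟩ := hrect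
  have h01 : q 0 1 = BR θ (q 1 1) := by
    rw [h0, h1, BR_rot]
  have h10 : q 1 1 = BR θ (q 0 1) := by
    rw [h0, h1, BR_rot]; norm_num
  have hmatch : ∀ i, q i 1 = BR θ (q (σswap i) 1) := by
    intro i
    fin_cases i
    · exact h01
    · exact h10
    · show q 2 1 = BR θ (q 3 1)
      rw [e23, e14, BR_neg, ← h10]
    · show q 3 1 = BR θ (q 2 1)
      rw [e14, e23, BR_neg, ← h01]
  -- velocity matching at t = 1
  have vmatch : ∀ i, q' i 1 = - BR θ (q' (σswap i) 1) := by
    intro i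
    fin_cases i
    · exact hvel1
    · show q' 1 1 = - BR θ (q' 0 1)
      rw [hvel1, BR_neg, BR_invol, neg_neg]
    · show q' 2 1 = - BR θ (q' 3 1)
      rw [hvel2, BR_neg, BR_invol, neg_neg]
    · exact hvel2
  -- acceleration matching at t = 1
  have amatch : ∀ i, q'' i 1 = BR θ (q'' (σswap i) 1) := by
    intro i
    rw [hNewton i 1 hone, hNewton (σswap i) 1 hone]
    have hst := sum_transport θ (fun k => q k 1) i
    rw [hst]
    simp only [← hmatch]
  -- Newton's equations for the glued curve
  have hNQ : ∀ i, ∀ t ∈ Ioo (0:ℝ) 2,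
      (if t ≤ 1 then q'' i t else BR θ (q'' (σswap i) (2 - t))) =
      ∑ j ∈ Finset.univ.erase i, (1 / n2 (Q j t - Q i t) ^ 3) • (Q j t - Q i t) := by
    rintro i t ⟨ht0, ht2⟩
    by_cases h : t ≤ 1
    · have hQ' : ∀ j, Q j t = q j t := fun j => by rw [hQ, if_pos h]
      rw [if_pos h]
      simp only [hQ']
      exact hNewton i t ⟨ht0.le, h⟩
    · push_neg at h
      have hs : 2 - t ∈ Icc (0:ℝ) 1 := ⟨by linarith, by linarith⟩
      rw [if_neg (not_le.mpr h), hNewton (σswap i) (2 - t) hs]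
      have hst := sum_transport θ (fun k => q k (2 - t)) i
      rw [hst]
      have hQ' : ∀ j, Q j t = BR θ (q (σswap j) (2 - t)) :=
        fun j => by rw [hQ, if_neg (not_le.mpr h)]
      simp only [hQ']
  have h21 : (2:ℝ) - 1 = 1 := by norm_num
  refine ⟨fun i t => if t ≤ 1 then q' i t else - BR θ (q' (σswap i) (2 - t)),
    fun i t => if t ≤ 1 then q'' i t else BR θ (q'' (σswap i) (2 - t)), ?_⟩
  intro i t ht
  have hcomp : ∀ (u : ℝ → ℝ × ℝ) (u' : ℝ → ℝ × ℝ),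
      (∀ s ∈ Icc (0:ℝ) 1, HasDerivAt (u) (u' s) s) →
      ∀ s ∈ Icc (1:ℝ) 2, HasDerivAt (fun r => u (2 - r)) (-(u' (2 - s))) s := by
    intro u u' hu s hs
    have hus := hu (2 - s) ⟨by linarith [hs.1, hs.2], by linarith [hs.1, hs.2]⟩
    have hi : HasDerivAt (fun r : ℝ => 2 - r) (-1) s := (hasDerivAt_id s).const_sub 2
    have := hus.scomp s hi
    rw [neg_one_smul] at this
    exact this
  refine ⟨?_, ?_, hNQ i t ht⟩
  · refine glue_aux (q i) (fun s => BR θ (q (σswap i) (2 - s))) (q' i)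
      (fun s => - BR θ (q' (σswap i) (2 - s))) (Q i) _ (hd i) ?_ (hQ i) (fun _ => rfl)
      ?_ ?_ t ht
    · intro s hs
      have := hasDerivAt_BR (θ := θ) (hcomp (q (σswap i)) (q' (σswap i)) (hd (σswap i)) s hs)
      simpa [BR_neg] using this
    · show q i 1 = BR θ (q (σswap i) (2 - 1))
      rw [h21]; exact hmatch i
    · show q' i 1 = - BR θ (q' (σswap i) (2 - 1))
      rw [h21]; exact vmatch i
  · refine glue_aux (q' i) (fun s => - BR θ (q' (σswap i) (2 - s))) (q'' i)
      (fun s => BR θ (q'' (σswap i) (2 - s)))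
      (fun s => if s ≤ 1 then q' i s else - BR θ (q' (σswap i) (2 - s))) _
      (hdd i) ?_ (fun _ => rfl) (fun _ => rfl) ?_ ?_ t ht
    · intro s hs
      have := (hasDerivAt_BR (θ := θ)
        (hcomp (q' (σswap i)) (q'' (σswap i)) (hdd (σswap i)) s hs)).neg
      rw [BR_neg, neg_neg] at this
      exact this
    · show q' i 1 = - BR θ (q' (σswap i) (2 - 1))
      rw [h21]; exact vmatch i
    · show q'' i 1 = BR θ (q'' (σswap i) (2 - 1))
      rw [h21]; exact amatch i
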